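/- In a finite simple graph G with bipartition (A,B) such that G_AB is a forest each of whose connected components has at least one edge and at most one leaf lying in A ∩ (that component), the columns of Γ_AB indexed by the non-isolated vertices of A are linearly independent over F2. -/

import Mathlib

open scoped Classical

/-- The graph `G_AB` keeping only the edges of `G` between `A` and `B = Aᶜ`. -/
def bipartiteSub {V : Type*} [Fintype V] [DecidableEq V]
    (G : SimpleGraph V) (A : Finset V) : SimpleGraph V where
  Adj u v := G.Adj u v ∧ ((u ∈ A ∧ v ∈ Aᶜ) ∨ (u ∈ Aᶜ ∧ v ∈ A))
  symm := by
    refine ⟨?_⟩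
    intro u v h
    exact ⟨h.1.symm, h.2.symm.imp And.symm And.symm⟩
  loopless := ⟨fun v h => G.irrefl h.1⟩

section Aux

open SimpleGraph

lemma gammaAux_eq_getVertOne_of_mem_edges {V : Type*} {H : SimpleGraph V} {x y w : V}
    {p : H.Walk x y} (hp : p.IsPath) (h : s(x, w) ∈ p.edges) : w = p.getVert 1 := by
  cases p with
  | nil => simp at h
  | @cons _ v' _ ha q =>
    rw [Walk.edges_cons, List.mem_cons] at h
    rcases h with h | h
    · rw [Sym2.eq_iff] at h
      rcases h with ⟨-, rfl⟩ | ⟨h1, rfl⟩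
      · exact (Walk.snd_cons q ha).symm
      · exact absurd ha (by rw [← h1]; exact H.irrefl)
    · exact absurd (Walk.fst_mem_support_of_mem_edges q h)
        ((Walk.cons_isPath_iff ha q).mp hp).2

lemma gammaAux_neighborSet_of_maximal_path {V : Type*} {H : SimpleGraph V}
    (hH : H.IsAcyclic) {x y : V} {p : H.Walk x y} (hp : p.IsPath) (hnil : ¬ p.Nil)
    (hmax : ∀ w, H.Adj x w → w ∈ p.support) :
    H.neighborSet x = {p.getVert 1} := by
  ext w
  simp only [mem_neighborSet, Set.mem_singleton_iff]
  constructor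
  · intro hadj
    have hw : w ∈ p.support := hmax w hadj
    have hqp : (p.takeUntil w hw).IsPath := hp.takeUntil hw
    have hcyc := hH (Walk.cons hadj.symm (p.takeUntil w hw))
    rw [Walk.cons_isCycle_iff] at hcyc
    push_neg at hcyc
    have hedge : s(w, x) ∈ (p.takeUntil w hw).edges := hcyc hqp
    have hedge' : s(x, w) ∈ p.edges :=
      p.edges_takeUntil_subset hw (Sym2.eq_swap ▸ hedge)
    exact gammaAux_eq_getVertOne_of_mem_edges hp hedge'
  · rintro rfl
    exact Walk.adj_snd hnil

/-- The subgraph spanned by the support of a coefficient function. -/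
def gammaAuxH {V : Type*} (GAB : SimpleGraph V) (gv : V → ZMod 2) : SimpleGraph V where
  Adj u v := GAB.Adj u v ∧ (gv u = 1 ∨ gv v = 1)
  symm := ⟨fun u v h => ⟨h.1.symm, h.2.symm⟩⟩
  loopless := ⟨fun v h => GAB.irrefl h.1⟩

lemma gammaAux_main {V : Type*} [Fintype V] [DecidableEq V]
    (G : SimpleGraph V) (A : Finset V) (GAB : SimpleGraph V)
    (hGAB : ∀ u v, GAB.Adj u v ↔
      G.Adj u v ∧ ((u ∈ A ∧ v ∈ Aᶜ) ∨ (u ∈ Aᶜ ∧ v ∈ A)))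
    (hforest : GAB.IsAcyclic)
    (hedge : ∀ v : V, ∃ w : V, GAB.Adj v w)
    (hleaf : ∀ a₁ a₂ : V, a₁ ∈ A → a₂ ∈ A →
      (GAB.neighborSet a₁).ncard = 1 →
      (GAB.neighborSet a₂).ncard = 1 →
      GAB.Reachable a₁ a₂ → a₁ = a₂) :
    LinearIndependent (ZMod 2)
      (fun a : {a : V // a ∈ A ∧ (GAB.neighborSet a).Nonempty} =>
        (fun b : ↥(Aᶜ) => if G.Adj (a : V) (b : V) then (1 : ZMod 2) else 0)) := by
  rw [Fintype.linearIndependent_iff]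
  intro g hg i
  by_contra hgi
  have h2cases : ∀ z : ZMod 2, z ≠ 0 → z = 1 := by decide
  have h2cases' : ∀ z : ZMod 2, z ≠ 1 → z = 0 := by decide
  have hone : g i = 1 := h2cases _ hgi
  -- the coefficient function on vertices
  obtain ⟨gv, hgvmem, hgvnot⟩ : ∃ gv : V → ZMod 2,
      (∀ j : {a : V // a ∈ A ∧ (GAB.neighborSet a).Nonempty}, gv (j : V) = g j) ∧
      (∀ v : V, v ∉ A → gv v = 0) := by
    refine ⟨fun v => if h : v ∈ A ∧ (GAB.neighborSet v).Nonempty then g ⟨v, h⟩ else 0,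
      fun j => ?_, fun v hv => ?_⟩
    · dsimp only
      rw [dif_pos j.2, Subtype.coe_eta]
    · dsimp only
      rw [dif_neg (fun h : v ∈ A ∧ (GAB.neighborSet v).Nonempty => hv h.1)]
  -- the subgraph spanned by the support of g
  obtain ⟨H, hHadj⟩ : ∃ H : SimpleGraph V, ∀ u v : V,
      H.Adj u v ↔ GAB.Adj u v ∧ (gv u = 1 ∨ gv v = 1) :=
    ⟨gammaAuxH GAB gv, fun u v => Iff.rfl⟩
  have hHle : H ≤ GAB := fun u v h => ((hHadj u v).mp h).1
  have hHac : H.IsAcyclic := fun v c hc => hforest (c.mapLe hHle) (hc.mapLe hHle)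
  -- the parity condition coming from the linear relation
  have hpar : ∀ b : V, b ∉ A →
      (((Finset.univ.filter (fun v => H.Adj b v)).card : ZMod 2)) = 0 := by
    intro b hb
    have hb' : b ∈ Aᶜ := Finset.mem_compl.mpr hb
    have h0 : ∑ j : {a : V // a ∈ A ∧ (GAB.neighborSet a).Nonempty},
        (if G.Adj (j : V) b then g j else 0) = 0 := by
      have := congrFun hg ⟨b, hb'⟩
      simpa using this
    have hterm : ∀ j : {a : V // a ∈ A ∧ (GAB.neighborSet a).Nonempty},
        (if G.Adj (j : V) b then g j else 0)
        = if H.Adj b (j : V) then (1 : ZMod 2) else 0 := by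
      intro j
      by_cases hadj : H.Adj b (j : V)
      · obtain ⟨hadj1, hadj2⟩ := (hHadj _ _).mp hadj
        have h1 : G.Adj (j : V) b := (((hGAB _ _).mp hadj1).1).symm
        have hgj : g j = 1 := by
          rcases hadj2 with h | h
          · exact absurd h (by rw [hgvnot b hb]; exact zero_ne_one)
          · rwa [hgvmem j] at h
        rw [if_pos hadj, if_pos h1, hgj]
      · rw [if_neg hadj]
        by_cases h1 : G.Adj (j : V) b
        · have hGABadj : GAB.Adj b (j : V) :=
            (hGAB _ _).mpr ⟨h1.symm, Or.inr ⟨hb', j.2.1⟩⟩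
          have hgj : g j = 0 := by
            have hnot : ¬ (gv b = 1 ∨ gv (j : V) = 1) :=
              fun h => hadj ((hHadj _ _).mpr ⟨hGABadj, h⟩)
            push_neg at hnot
            have := hnot.2
            rw [hgvmem j] at this
            exact h2cases' _ this
          rw [if_pos h1, hgj]
        · rw [if_neg h1]
    have h0' : ∑ j : {a : V // a ∈ A ∧ (GAB.neighborSet a).Nonempty},
        (if H.Adj b (j : V) then (1 : ZMod 2) else 0) = 0 := by
      refine Eq.trans ?_ h0
      exact Finset.sum_congr rfl fun j _ => (hterm j).symm
    have hAdjP : ∀ v : V, H.Adj b v → (v ∈ A ∧ (GAB.neighborSet v).Nonempty) := by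
      intro v hv
      have hA : v ∈ A := by
        rcases ((hGAB _ _).mp ((hHadj _ _).mp hv).1).2 with ⟨hbA, _⟩ | ⟨_, hvA⟩
        · exact absurd hbA hb
        · exact hvA
      obtain ⟨w, hw⟩ := hedge v
      exact ⟨hA, ⟨w, hw⟩⟩
    have hsum1 : ∑ v ∈ Finset.univ.filter
          (fun v : V => v ∈ A ∧ (GAB.neighborSet v).Nonempty),
          (if H.Adj b v then (1 : ZMod 2) else 0)
        = ∑ j : {a : V // a ∈ A ∧ (GAB.neighborSet a).Nonempty},
          (if H.Adj b (j : V) then (1 : ZMod 2) else 0) := by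
      exact Finset.sum_subtype _ (by simp) _
    have hsum2 : ∑ v : V, (if H.Adj b v then (1 : ZMod 2) else 0)
        = ∑ v ∈ Finset.univ.filter
          (fun v : V => v ∈ A ∧ (GAB.neighborSet v).Nonempty),
          (if H.Adj b v then (1 : ZMod 2) else 0) := by
      refine (Finset.sum_subset (Finset.filter_subset _ _) ?_).symm
      intro v _ hv
      rw [if_neg (fun h => hv (Finset.mem_filter.mpr ⟨Finset.mem_univ v, hAdjP v h⟩))]
    rw [← Finset.sum_boole, hsum2, hsum1, h0']
  -- any H-leaf is an A-leaf of GAB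
  have hkey : ∀ x w : V, H.neighborSet x = {w} →
      x ∈ A ∧ (GAB.neighborSet x).ncard = 1 := by
    intro x w hx
    have hxw : H.Adj x w := by
      have : w ∈ H.neighborSet x := by rw [hx]; rfl
      exact this
    have hxA : x ∈ A := by
      by_contra hxA
      have hp0 := hpar x hxA
      have hflt : Finset.univ.filter (fun v => H.Adj x v) = {w} := by
        ext v
        simp only [Finset.mem_filter, Finset.mem_univ, true_and, Finset.mem_singleton]
        constructor
        · intro h
          have : v ∈ H.neighborSet x := h
          rwa [hx] at this
        · rintro rfl; exact hxw
      rw [hflt] at hp0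
      simp at hp0
    have hgvx : gv x = 1 := by
      rcases ((hHadj _ _).mp hxw).2 with h | h
      · exact h
      · exfalso
        have hwA : w ∉ A := by
          rcases ((hGAB _ _).mp ((hHadj _ _).mp hxw).1).2 with ⟨_, hw⟩ | ⟨hx', _⟩
          · exact Finset.mem_compl.mp hw
          · exact absurd hxA (Finset.mem_compl.mp hx')
        rw [hgvnot w hwA] at h
        exact zero_ne_one h
    have hnsx : GAB.neighborSet x = {w} := by
      rw [← hx]
      ext v
      simp only [mem_neighborSet]
      exact ⟨fun h => (hHadj _ _).mpr ⟨h, Or.inl hgvx⟩, fun h => ((hHadj _ _).mp h).1⟩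
    exact ⟨hxA, by rw [hnsx]; exact Set.ncard_singleton w⟩
  -- a maximum-length path in H
  obtain ⟨b, hb⟩ := hedge (i : V)
  have hgvi : gv (i : V) = 1 := by rw [hgvmem i]; exact hone
  have hHib : H.Adj (i : V) b := (hHadj _ _).mpr ⟨hb, Or.inl hgvi⟩
  have hpath1 : (Walk.cons hHib Walk.nil).IsPath := by
    rw [Walk.cons_isPath_iff]
    simp [hHib.ne]
  have hne : Nonempty (Σ x : V, Σ y : V, H.Path x y) :=
    ⟨⟨(i : V), b, ⟨Walk.cons hHib Walk.nil, hpath1⟩⟩⟩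
  obtain ⟨q₀, hq₀⟩ := Finite.exists_max
    (fun q : Σ x : V, Σ y : V, H.Path x y => q.2.2.val.length)
  obtain ⟨x, y, p, hp⟩ := q₀
  simp only at hq₀
  have hlen : 1 ≤ p.length := by
    have := hq₀ ⟨(i : V), b, ⟨Walk.cons hHib Walk.nil, hpath1⟩⟩
    simpa using this
  have hnil : ¬ p.Nil := Walk.not_nil_iff_lt_length.mpr hlen
  have hmaxx : ∀ w, H.Adj x w → w ∈ p.support := by
    intro w hw
    by_contra hws
    have hpath : (Walk.cons hw.symm p).IsPath := by
      rw [Walk.cons_isPath_iff]; exact ⟨hp, hws⟩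
    have := hq₀ ⟨w, y, ⟨Walk.cons hw.symm p, hpath⟩⟩
    simp [Walk.length_cons] at this
  have hmaxy : ∀ w, H.Adj y w → w ∈ p.reverse.support := by
    intro w hw
    by_contra hws
    have hpath : (Walk.cons hw.symm p.reverse).IsPath := by
      rw [Walk.cons_isPath_iff]; exact ⟨hp.reverse, hws⟩
    have := hq₀ ⟨w, x, ⟨Walk.cons hw.symm p.reverse, hpath⟩⟩
    simp [Walk.length_cons, Walk.length_reverse] at this
  have hnilr : ¬ p.reverse.Nil := by
    rw [Walk.not_nil_iff_lt_length, Walk.length_reverse]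
    exact hlen
  have hNx := gammaAux_neighborSet_of_maximal_path hHac hp hnil hmaxx
  have hNy := gammaAux_neighborSet_of_maximal_path hHac hp.reverse hnilr hmaxy
  obtain ⟨hxA, hxcard⟩ := hkey x _ hNx
  obtain ⟨hyA, hycard⟩ := hkey y _ hNy
  have hreach : GAB.Reachable x y := (p.reachable).mono hHle
  have hxy := hleaf x y hxA hyA hxcard hycard hreach
  subst hxy
  rw [Walk.isPath_iff_eq_nil] at hp
  subst hp
  simp at hlen

end Aux

/-- If `G_AB` is a forest, every connected component of `G_AB` contains at least one
edge, and each component contains at most one leaf lying in `A`, then the columns of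
`Γ_AB` indexed by the non-isolated vertices of `A` are linearly independent over `F₂`. -/
theorem gammaAB_columns_linearIndependent {V : Type*} [Fintype V] [DecidableEq V]
    (G : SimpleGraph V) (A : Finset V)
    (hforest : (bipartiteSub G A).IsAcyclic)
    (hedge : ∀ v : V, ∃ w : V, (bipartiteSub G A).Adj v w)
    (hleaf : ∀ a₁ a₂ : V, a₁ ∈ A → a₂ ∈ A →
      ((bipartiteSub G A).neighborSet a₁).ncard = 1 →
      ((bipartiteSub G A).neighborSet a₂).ncard = 1 →
      (bipartiteSub G A).Reachable a₁ a₂ → a₁ = a₂) :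
    LinearIndependent (ZMod 2)
      (fun a : {a : V // a ∈ A ∧ ((bipartiteSub G A).neighborSet a).Nonempty} =>
        (fun b : ↥(Aᶜ) => if G.Adj (a : V) (b : V) then (1 : ZMod 2) else 0)) :=
  gammaAux_main G A (bipartiteSub G A) (fun _ _ => Iff.rfl) hforest hedge hleaf
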